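/- Let M, M̃ ∈ K^{m×k}, let J₁ ⊆ {1,…,k} and J₂ = {1,…,k}\J₁ with J₂ nonempty. Suppose ‖M̃*M − I_k‖ < 1. Then M̃_{J₁}*M_{J₁} is invertible and, setting E = I_m − M_{J₁}(M̃_{J₁}*M_{J₁})^{-1}M̃_{J₁}* (with E = I_m when J₁ = ∅), one has ‖M̃_{J₂}* E M_{J₂} − I_{|J₂|}‖ ≤ ‖M̃*M − I_k‖. -/
import Mathlib


open scoped BigOperators
open Matrix MeasureTheory

noncomputable section

namespace ObliquePursuit

variable {𝕜 : Type*} [RCLike 𝕜]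

/-- The Euclidean (`ℓ²`) norm of a finitely indexed vector. -/
def l2 {ι : Type*} [Fintype ι] (x : ι → 𝕜) : ℝ :=
  Real.sqrt (∑ i, ‖x i‖ ^ 2)

/-- The spectral (`ℓ² → ℓ²` operator) norm of a matrix. -/
def specNorm {ι κ : Type*} [Fintype ι] [Fintype κ] [DecidableEq κ]
    (M : Matrix ι κ 𝕜) : ℝ :=
  ‖LinearMap.toContinuousLinearMap (Matrix.toEuclideanLin M)‖

/-- `x` is `s`-sparse: it has at most `s` nonzero entries. -/
def Sparse {ι : Type*} (s : ℕ) (x : ι → 𝕜) : Prop :=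
  ∃ J : Finset ι, J.card ≤ s ∧ ∀ i, x i ≠ 0 → i ∈ J

/-- The `s`-restricted biorthogonality constant `θ_s(M)`: the smallest `δ ≥ 0` such that
`|⟨y, Mx⟩ − ⟨y, x⟩| ≤ δ‖x‖₂‖y‖₂` for all `x, y` supported on a common index set of
cardinality at most `s`. -/
def theta {ι : Type*} [Fintype ι] (s : ℕ) (M : Matrix ι ι 𝕜) : ℝ :=
  sInf {δ : ℝ | 0 ≤ δ ∧ ∀ J : Finset ι, J.card ≤ s →
    ∀ x y : ι → 𝕜, (∀ i, x i ≠ 0 → i ∈ J) → (∀ i, y i ≠ 0 → i ∈ J) →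
      ‖star y ⬝ᵥ M.mulVec x - star y ⬝ᵥ x‖ ≤ δ * l2 x * l2 y}

/-- The `s`-restricted isometry constant `δ_s(Ψ)`. -/
def ric {ι κ : Type*} [Fintype ι] [Fintype κ] (s : ℕ) (Ψ : Matrix ι κ 𝕜) : ℝ :=
  sInf {δ : ℝ | 0 ≤ δ ∧ ∀ x : κ → 𝕜, Sparse s x →
    (1 - δ) * l2 x ^ 2 ≤ l2 (Ψ.mulVec x) ^ 2 ∧
      l2 (Ψ.mulVec x) ^ 2 ≤ (1 + δ) * l2 x ^ 2}

/-- Coordinate projection `Π_J`: keep the entries indexed by `J`, zero out the others. -/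
def proj {ι : Type*} [DecidableEq ι] (J : Finset ι) (x : ι → 𝕜) : ι → 𝕜 :=
  fun i => if i ∈ J then x i else 0

/-- The column submatrix `Ψ_J` of `Ψ` formed by the columns indexed by `J`. -/
def cols {ι κ : Type*} (Ψ : Matrix ι κ 𝕜) (J : Finset κ) :
    Matrix ι {j // j ∈ J} 𝕜 :=
  Ψ.submatrix id fun j => (j : κ)

/-- The `j`-th column of `Ψ`. -/
def col {ι κ : Type*} (Ψ : Matrix ι κ 𝕜) (j : κ) : ι → 𝕜 :=
  fun i => Ψ i j

/-- The complementary oblique projector `E = I − Ψ_J (Ψ̃_J^* Ψ_J)⁻¹ Ψ̃_J^*`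
(equal to `I` when `J = ∅`). -/
def obliqueE {ι κ : Type*} [Fintype ι] [DecidableEq ι] [DecidableEq κ]
    (Ψ Ψt : Matrix ι κ 𝕜) (J : Finset κ) : Matrix ι ι 𝕜 :=
  1 - cols Ψ J * ((cols Ψt J)ᴴ * cols Ψ J)⁻¹ * (cols Ψt J)ᴴ

/-- The smallest (real) eigenvalue of a matrix. -/
def lamMin {ι : Type*} [Fintype ι] (G : Matrix ι ι 𝕜) : ℝ :=
  sInf {r : ℝ | ∃ v : ι → 𝕜, v ≠ 0 ∧ G.mulVec v = (r : 𝕜) • v}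

/-- The `j`-th largest singular value (1-indexed) of a matrix, characterized via the
Eckart–Young–Mirsky theorem: `σ_j(A) = min { ‖A − B‖ : rank B < j }` where `‖·‖` is the
spectral norm. -/
def singVal {ι κ : Type*} [Fintype ι] [Fintype κ] [DecidableEq κ]
    (A : Matrix ι κ 𝕜) (j : ℕ) : ℝ :=
  sInf {r : ℝ | ∃ B : Matrix ι κ 𝕜, B.rank < j ∧ r = specNorm (A - B)}


lemma l2_nonneg {ι : Type*} [Fintype ι] (x : ι → 𝕜) : 0 ≤ l2 x := Real.sqrt_nonneg _

lemma l2_sq {ι : Type*} [Fintype ι] (x : ι → 𝕜) : l2 x ^ 2 = ∑ i, ‖x i‖ ^ 2 :=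
  Real.sq_sqrt (Finset.sum_nonneg fun _ _ => sq_nonneg _)

lemma l2_pos {ι : Type*} [Fintype ι] {x : ι → 𝕜} (hx : x ≠ 0) : 0 < l2 x := by
  have h : 0 < ∑ i, ‖x i‖ ^ 2 := by
    obtain ⟨i, hi⟩ : ∃ i, x i ≠ 0 := by
      by_contra h; push_neg at h; exact hx (funext h)
    exact Finset.sum_pos' (fun j _ => by positivity)
      ⟨i, Finset.mem_univ i, pow_pos (norm_pos_iff.mpr hi) 2⟩
  exact Real.sqrt_pos.mpr h

lemma l2_neg {ι : Type*} [Fintype ι] (x : ι → 𝕜) : l2 (-x) = l2 x := by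
  simp [l2]

lemma l2_eq_norm {ι : Type*} [Fintype ι] (x : ι → 𝕜) :
    l2 x = ‖((WithLp.equiv 2 (ι → 𝕜)).symm x : EuclideanSpace 𝕜 ι)‖ := by
  rw [EuclideanSpace.norm_eq]; rfl

lemma specNorm_nonneg {ι κ : Type*} [Fintype ι] [Fintype κ] [DecidableEq κ]
    (M : Matrix ι κ 𝕜) : 0 ≤ specNorm M := norm_nonneg _

lemma l2_mulVec_le {ι κ : Type*} [Fintype ι] [Fintype κ] [DecidableEq κ]
    (M : Matrix ι κ 𝕜) (x : κ → 𝕜) :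
    l2 (M.mulVec x) ≤ specNorm M * l2 x := by
  have := (LinearMap.toContinuousLinearMap (Matrix.toEuclideanLin M)).le_opNorm
    ((WithLp.equiv 2 (κ → 𝕜)).symm x)
  simpa [specNorm, l2_eq_norm, Matrix.toEuclideanLin_apply] using this

lemma specNorm_le {ι κ : Type*} [Fintype ι] [Fintype κ] [DecidableEq κ]
    {M : Matrix ι κ 𝕜} {C : ℝ} (hC : 0 ≤ C)
    (h : ∀ x : κ → 𝕜, l2 (M.mulVec x) ≤ C * l2 x) : specNorm M ≤ C := by
  apply ContinuousLinearMap.opNorm_le_bound _ hC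
  intro v
  have := h ((WithLp.equiv 2 (κ → 𝕜)) v)
  simpa [l2_eq_norm, Matrix.toEuclideanLin_apply] using this

lemma le_of_sq_le_sq {a b : ℝ} (hb : 0 ≤ b) (h : a ^ 2 ≤ b ^ 2) (ha : 0 ≤ a) : a ≤ b := by
  nlinarith

/-- The embedding of a finset-subtype into the ambient type. -/
def emb {ι : Type*} (J : Finset ι) : {j // j ∈ J} → ι := fun j => (j : ι)

def combine {ι : Type*} [Fintype ι] [DecidableEq ι] (J : Finset ι)
    (u : {j // j ∈ J} → 𝕜) (w : {j // j ∈ Jᶜ} → 𝕜) : ι → 𝕜 :=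
  fun j => if h : j ∈ J then u ⟨j, h⟩ else w ⟨j, Finset.mem_compl.mpr h⟩

lemma combine_mem {ι : Type*} [Fintype ι] [DecidableEq ι] (J : Finset ι)
    (u : {j // j ∈ J} → 𝕜) (w : {j // j ∈ Jᶜ} → 𝕜) (j : {j // j ∈ J}) :
    combine J u w (emb J j) = u j := by
  simp [combine, emb, j.2]

lemma combine_notMem {ι : Type*} [Fintype ι] [DecidableEq ι] (J : Finset ι)
    (u : {j // j ∈ J} → 𝕜) (w : {j // j ∈ Jᶜ} → 𝕜) (j : {j // j ∈ Jᶜ}) :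
    combine J u w (emb Jᶜ j) = w j := by
  have h : (j : ι) ∉ J := Finset.mem_compl.mp j.2
  simp [combine, emb, h]

lemma sum_split {ι A : Type*} [Fintype ι] [DecidableEq ι] [AddCommMonoid A]
    (J : Finset ι) (f : ι → A) :
    ∑ i, f i = (∑ i : {j // j ∈ J}, f (emb J i)) + ∑ i : {j // j ∈ Jᶜ}, f (emb Jᶜ i) := by
  rw [show (fun i : {j // j ∈ J} => f (emb J i)) = fun i : {j // j ∈ J} => f i from rfl,
    show (fun i : {j // j ∈ Jᶜ} => f (emb Jᶜ i)) = fun i : {j // j ∈ Jᶜ} => f i from rfl,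
    Finset.sum_coe_sort, Finset.sum_coe_sort, Finset.sum_add_sum_compl]

lemma mulVec_combine {ι κ' : Type*} [Fintype ι] [DecidableEq ι] (J : Finset ι)
    (N : Matrix κ' ι 𝕜) (u : {j // j ∈ J} → 𝕜) (w : {j // j ∈ Jᶜ} → 𝕜) (i : κ') :
    N.mulVec (combine J u w) i
      = (N.submatrix id (emb J)).mulVec u i + (N.submatrix id (emb Jᶜ)).mulVec w i := by
  simp only [Matrix.mulVec, dotProduct, Matrix.submatrix_apply, id]
  rw [sum_split J (fun j => N i j * combine J u w j)]
  congr 1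
  · exact Finset.sum_congr rfl fun j _ => by rw [combine_mem]
  · exact Finset.sum_congr rfl fun j _ => by rw [combine_notMem]

lemma submatrix_one_emb {ι : Type*} [Fintype ι] [DecidableEq ι] (J : Finset ι) :
    (1 : Matrix ι ι 𝕜).submatrix (emb J) (emb J) = 1 := by
  ext i j
  by_cases h : i = j
  · simp [h, Matrix.one_apply]
  · have h' : emb J i ≠ emb J j := fun hh => h (Subtype.ext hh)
    simp [Matrix.one_apply, h, h']


set_option maxHeartbeats 1000000 in
/-- biorthogonality is preserved under the oblique projection
`E = I − M_{J₁}(M̃_{J₁}^* M_{J₁})⁻¹ M̃_{J₁}^*`. -/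
theorem statement3 (m k : ℕ) (M Mt : Matrix (Fin m) (Fin k) 𝕜)
    (J₁ : Finset (Fin k)) (hJ₂ : (J₁ᶜ).Nonempty)
    (hcontr : specNorm (Mtᴴ * M - 1) < 1) :
    IsUnit ((cols Mt J₁)ᴴ * cols M J₁).det ∧
      specNorm ((cols Mt J₁ᶜ)ᴴ * obliqueE M Mt J₁ * cols M J₁ᶜ - 1) ≤
        specNorm (Mtᴴ * M - 1) := by
  classical
  set δ := specNorm (Mtᴴ * M - 1) with hδdef
  have hδ0 : (0:ℝ) ≤ δ := specNorm_nonneg _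
  set G : Matrix (Fin k) (Fin k) 𝕜 := Mtᴴ * M with hGdef
  have key : ∀ (J J' : Finset (Fin k)),
      (cols Mt J)ᴴ * cols M J' = G.submatrix (emb J) (emb J') := by
    intro J J'; ext i j
    simp [cols, emb, Matrix.mul_apply, Matrix.conjTranspose_apply, hGdef]
  have hA : specNorm (G - 1) = δ := by rw [hδdef, hGdef]
  -- bound for the (1,1) submatrix of G - 1
  have hbound : ∀ v : {j // j ∈ J₁} → 𝕜,
      l2 (((G - 1).submatrix (emb J₁) (emb J₁)).mulVec v) ≤ δ * l2 v := by
    intro v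
    have hrow : ∀ i : {j // j ∈ J₁},
        ((G - 1).submatrix (emb J₁) (emb J₁)).mulVec v i
          = (G - 1).mulVec (combine J₁ v 0) (emb J₁ i) := by
      intro i
      rw [mulVec_combine]
      simp only [Matrix.mulVec_zero, Pi.zero_apply, add_zero]
      rfl
    have hxtl2 : l2 (combine J₁ v (0 : {j // j ∈ J₁ᶜ} → 𝕜)) ^ 2 = l2 v ^ 2 := by
      rw [l2_sq, l2_sq, sum_split J₁ (fun j => ‖combine J₁ v 0 j‖ ^ 2)]
      have e1 : ∀ j : {j // j ∈ J₁}, ‖combine J₁ v (0 : {j // j ∈ J₁ᶜ} → 𝕜) (emb J₁ j)‖ ^ 2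
          = ‖v j‖ ^ 2 := fun j => by rw [combine_mem]
      have e2 : ∀ j : {j // j ∈ J₁ᶜ}, ‖combine J₁ v (0 : {j // j ∈ J₁ᶜ} → 𝕜) (emb J₁ᶜ j)‖ ^ 2
          = 0 := fun j => by rw [combine_notMem]; simp
      rw [Finset.sum_congr rfl fun j _ => e1 j, Finset.sum_congr rfl fun j _ => e2 j]
      simp
    have hsq : l2 (((G - 1).submatrix (emb J₁) (emb J₁)).mulVec v) ^ 2 ≤ (δ * l2 v) ^ 2 := by
      rw [l2_sq]
      have hle : ∑ i : {j // j ∈ J₁}, ‖((G - 1).submatrix (emb J₁) (emb J₁)).mulVec v i‖ ^ 2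
          ≤ l2 ((G - 1).mulVec (combine J₁ v 0)) ^ 2 := by
        rw [l2_sq, sum_split J₁ (fun j => ‖(G - 1).mulVec (combine J₁ v 0) j‖ ^ 2)]
        rw [Finset.sum_congr rfl fun (i : {j // j ∈ J₁}) _ => by rw [hrow i]]
        exact le_add_of_nonneg_right (Finset.sum_nonneg fun _ _ => sq_nonneg _)
      refine hle.trans ?_
      have h1 : l2 ((G - 1).mulVec (combine J₁ v 0)) ≤ δ * l2 (combine J₁ v 0) := by
        have := l2_mulVec_le (G - 1) (combine J₁ v 0); rwa [hA] at this
      have h2 : l2 ((G - 1).mulVec (combine J₁ v 0)) ^ 2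
          ≤ (δ * l2 (combine J₁ v 0)) ^ 2 := by
        have := l2_nonneg ((G - 1).mulVec (combine J₁ v 0)); nlinarith
      calc l2 ((G - 1).mulVec (combine J₁ v 0)) ^ 2
          ≤ (δ * l2 (combine J₁ v 0)) ^ 2 := h2
        _ = (δ * l2 v) ^ 2 := by rw [mul_pow, mul_pow, hxtl2]
    exact le_of_sq_le_sq (mul_nonneg hδ0 (l2_nonneg _)) hsq (l2_nonneg _)
  -- invertibility
  have hA11 : G.submatrix (emb J₁) (emb J₁) - 1 = (G - 1).submatrix (emb J₁) (emb J₁) := by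
    rw [show ((G - 1).submatrix (emb J₁) (emb J₁))
        = G.submatrix (emb J₁) (emb J₁)
          - (1 : Matrix (Fin k) (Fin k) 𝕜).submatrix (emb J₁) (emb J₁) from rfl,
      submatrix_one_emb]
  have hdet : IsUnit (G.submatrix (emb J₁) (emb J₁)).det := by
    rw [isUnit_iff_ne_zero]
    intro hd
    obtain ⟨v, hv0, hv⟩ := Matrix.exists_mulVec_eq_zero_iff.mpr hd
    have hAv : ((G - 1).submatrix (emb J₁) (emb J₁)).mulVec v = -v := by
      rw [← hA11, Matrix.sub_mulVec, hv, Matrix.one_mulVec]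
      simp
    have := hbound v
    rw [hAv, l2_neg] at this
    have hpos := l2_pos hv0
    nlinarith
  have hGdet : IsUnit ((cols Mt J₁)ᴴ * cols M J₁).det := by rw [key J₁ J₁]; exact hdet
  refine ⟨hGdet, ?_⟩
  -- Part 2 : the Schur complement bound
  set B := (G.submatrix (emb J₁) (emb J₁))⁻¹ with hB
  have hGB : (G.submatrix (emb J₁) (emb J₁)) * B = 1 := Matrix.mul_nonsing_inv _ hdet
  set G12 := G.submatrix (emb J₁) (emb J₁ᶜ) with hG12
  set G21 := G.submatrix (emb J₁ᶜ) (emb J₁) with hG21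
  set G22 := G.submatrix (emb J₁ᶜ) (emb J₁ᶜ) with hG22
  have hT : (cols Mt J₁ᶜ)ᴴ * obliqueE M Mt J₁ * cols M J₁ᶜ
      = G22 - G21 * B * G12 := by
    rw [obliqueE, key J₁ J₁]
    rw [Matrix.mul_sub, Matrix.mul_one, Matrix.sub_mul, key J₁ᶜ J₁ᶜ]
    congr 1
    calc (cols Mt J₁ᶜ)ᴴ * (cols M J₁ * (G.submatrix (emb J₁) (emb J₁))⁻¹ * (cols Mt J₁)ᴴ)
          * cols M J₁ᶜ
        = ((cols Mt J₁ᶜ)ᴴ * cols M J₁) * (G.submatrix (emb J₁) (emb J₁))⁻¹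
            * ((cols Mt J₁)ᴴ * cols M J₁ᶜ) := by
          simp only [Matrix.mul_assoc]
      _ = G21 * B * G12 := by rw [key J₁ᶜ J₁, key J₁ J₁ᶜ, ← hB, ← hG21, ← hG12]
  rw [hT]
  apply specNorm_le hδ0
  intro x
  set x₁ : {j // j ∈ J₁} → 𝕜 := -(B.mulVec (G12.mulVec x)) with hx₁
  have hGx1 : (G.submatrix (emb J₁) (emb J₁)).mulVec x₁ = -(G12.mulVec x) := by
    rw [hx₁, Matrix.mulVec_neg, Matrix.mulVec_mulVec, hGB, Matrix.one_mulVec]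
  have hG21x1 : G21.mulVec x₁ = -((G21 * B * G12).mulVec x) := by
    rw [hx₁, Matrix.mulVec_neg, Matrix.mulVec_mulVec, Matrix.mulVec_mulVec, Matrix.mul_assoc]
  have hclaim1 : ∀ i : {j // j ∈ J₁},
      (G - 1).mulVec (combine J₁ x₁ x) (emb J₁ i) = -(x₁ i) := by
    intro i
    rw [Matrix.sub_mulVec, Matrix.one_mulVec, Pi.sub_apply, mulVec_combine, combine_mem]
    rw [show ((G.submatrix id (emb J₁)).mulVec x₁) (emb J₁ i)
        = ((G.submatrix (emb J₁) (emb J₁)).mulVec x₁) i from rfl]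
    rw [show ((G.submatrix id (emb J₁ᶜ)).mulVec x) (emb J₁ i) = (G12.mulVec x) i from rfl]
    rw [hGx1]
    simp only [Pi.neg_apply]
    ring
  have hclaim2 : ∀ i : {j // j ∈ J₁ᶜ},
      (G - 1).mulVec (combine J₁ x₁ x) (emb J₁ᶜ i)
        = ((G22 - G21 * B * G12 - 1).mulVec x) i := by
    intro i
    rw [Matrix.sub_mulVec, Matrix.one_mulVec, Pi.sub_apply, mulVec_combine, combine_notMem]
    rw [show ((G.submatrix id (emb J₁)).mulVec x₁) (emb J₁ᶜ i) = (G21.mulVec x₁) i from rfl]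
    rw [show ((G.submatrix id (emb J₁ᶜ)).mulVec x) (emb J₁ᶜ i) = (G22.mulVec x) i from rfl]
    rw [hG21x1, Matrix.sub_mulVec, Matrix.sub_mulVec, Matrix.one_mulVec]
    simp only [Pi.sub_apply, Pi.neg_apply]
    ring
  -- norms
  have hyl2 : l2 ((G - 1).mulVec (combine J₁ x₁ x)) ^ 2
      = l2 x₁ ^ 2 + l2 ((G22 - G21 * B * G12 - 1).mulVec x) ^ 2 := by
    rw [l2_sq, l2_sq, l2_sq,
      sum_split J₁ (fun j => ‖(G - 1).mulVec (combine J₁ x₁ x) j‖ ^ 2)]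
    congr 1
    · refine Finset.sum_congr rfl fun i _ => ?_
      rw [hclaim1 i]; simp
    · exact Finset.sum_congr rfl fun i _ => by rw [hclaim2 i]
  have hxtl2 : l2 (combine J₁ x₁ x) ^ 2 = l2 x₁ ^ 2 + l2 x ^ 2 := by
    rw [l2_sq, l2_sq, l2_sq, sum_split J₁ (fun j => ‖combine J₁ x₁ x j‖ ^ 2)]
    congr 1
    · exact Finset.sum_congr rfl fun i _ => by rw [combine_mem]
    · exact Finset.sum_congr rfl fun i _ => by rw [combine_notMem]
  have hyb : l2 ((G - 1).mulVec (combine J₁ x₁ x)) ≤ δ * l2 (combine J₁ x₁ x) := by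
    have := l2_mulVec_le (G - 1) (combine J₁ x₁ x); rwa [hA] at this
  have hyb2 : l2 ((G - 1).mulVec (combine J₁ x₁ x)) ^ 2
      ≤ δ ^ 2 * l2 (combine J₁ x₁ x) ^ 2 := by
    have := l2_nonneg ((G - 1).mulVec (combine J₁ x₁ x)); nlinarith
  have hfinal : l2 ((G22 - G21 * B * G12 - 1).mulVec x) ^ 2 ≤ (δ * l2 x) ^ 2 := by
    have h1 := l2_nonneg x₁
    have hδ1 : δ ^ 2 ≤ 1 := by nlinarith
    rw [mul_pow]
    nlinarith [sq_nonneg (l2 x₁)]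
  exact le_of_sq_le_sq (mul_nonneg hδ0 (l2_nonneg _)) hfinal (l2_nonneg _)

end ObliquePursuit
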